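/- arXiv:2408.03473 — 4 statements merged into one kernel-verified Lean document; each statement's English description precedes it below -/
import Mathlib

section
/- Let t ≥ 1 and s ≥ 3 be integers, let 1 ≤ a < b be integers with s^a > 2t, and let N be the positive integer with N + 1 = ⌊s^a / t⌋. Let 𝒟 ⊆ {0,1,…,s−1} be a digit set with 0 ∈ 𝒟 and s−1 ∉ 𝒟, let ε ∈ (0,1), and set 𝔅(ξ) := ε 𝔅*(ξ) + (1 − ε) ℭ(ξ) and 𝔉(ξ) := 𝔄(ξ; N, s, a) · 𝔅(ξ). Then for every ξ ∈ ℤ with 1 ≤ |ξ| < s^b, one has |𝔉(ξ)| ≤ ε + (s^{a−b}/N) · |sin(π ξ s^{−b})|^{−1}. -/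
open Finset

/-- `e(y) = exp(-2πi y)`. -/
noncomputable def eneg (y : ℝ) : ℂ := Complex.exp (-(2 * Real.pi * Complex.I * (y : ℂ)))

/-- `1̂(θ) = ∫₀¹ e(xθ) dx`. -/
noncomputable def oneHat (θ : ℝ) : ℂ := ∫ x in (0:ℝ)..1, eneg (x * θ)

/-- The `j`-th base-`s` digit of the natural number `n`. -/
def digitOf (s n j : ℕ) : ℕ := n / s ^ j % s

/-- `𝔄(ξ; N, s, a) = N⁻¹ Σ_{k<N} e(ξ k s^{-a})`. -/
noncomputable def Afun (N s a : ℕ) (ξ : ℤ) : ℂ :=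
  (N : ℂ)⁻¹ * ∑ k ∈ Finset.range N, eneg ((ξ : ℝ) * k / (s : ℝ) ^ a)

/-- `ℭ(ξ) = s^{a-b} Σ_{ℓ < s^{b-a}} e(ξ ℓ s^{-b})`. -/
noncomputable def Cfun (s a b : ℕ) (ξ : ℤ) : ℂ :=
  (((s : ℝ) ^ a / (s : ℝ) ^ b : ℝ) : ℂ) *
    ∑ ℓ ∈ Finset.range (s ^ (b - a)), eneg ((ξ : ℝ) * ℓ / (s : ℝ) ^ b)

/-- `𝕃*`: the set of `ℓ < s^{b-a}` all of whose `b-a` base-`s` digits lie in `D`. -/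
def Lstar (s a b : ℕ) (D : Finset ℕ) : Finset ℕ :=
  (Finset.range (s ^ (b - a))).filter fun ℓ => ∀ j < b - a, digitOf s ℓ j ∈ D

/-- `𝔅*(ξ) = r^{a-b} Σ_{ℓ ∈ 𝕃*} e(ξ ℓ s^{-b})`, where `r = #D`. -/
noncomputable def Bstar (s a b : ℕ) (D : Finset ℕ) (ξ : ℤ) : ℂ :=
  (((D.card : ℝ) ^ a / (D.card : ℝ) ^ b : ℝ) : ℂ) *
    ∑ ℓ ∈ Lstar s a b D, eneg ((ξ : ℝ) * ℓ / (s : ℝ) ^ b)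

/-- `g(ξ, k; s, 𝒜) = (#𝒜)⁻¹ Σ_{d ∈ 𝒜} e(ξ d s^{-k})`. -/
noncomputable def gfun (s : ℕ) (A : Finset ℕ) (ξ : ℤ) (k : ℕ) : ℂ :=
  (A.card : ℂ)⁻¹ * ∑ d ∈ A, eneg ((ξ : ℝ) * d / (s : ℝ) ^ k)

lemma eneg_eq (y : ℝ) : eneg y = Complex.exp (((-(2 * Real.pi * y) : ℝ) : ℂ) * Complex.I) := by
  unfold eneg; congr 1; push_cast; ring

lemma norm_eneg (y : ℝ) : ‖eneg y‖ = 1 := by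
  rw [eneg_eq]; exact Complex.norm_exp_ofReal_mul_I _

lemma eneg_nat_mul (x : ℝ) (m : ℕ) : eneg ((m : ℝ) * x) = eneg x ^ m := by
  unfold eneg
  rw [← Complex.exp_nat_mul]
  congr 1; push_cast; ring

lemma norm_eneg_sub_one (y : ℝ) : ‖eneg y - 1‖ = 2 * |Real.sin (Real.pi * y)| := by
  rw [eneg_eq, Complex.exp_mul_I]
  have h : Complex.cos ((-(2 * Real.pi * y) : ℝ) : ℂ) + Complex.sin ((-(2 * Real.pi * y) : ℝ) : ℂ) * Complex.I - 1
      = ((Real.cos (-(2 * Real.pi * y)) - 1 : ℝ) : ℂ) + ((Real.sin (-(2 * Real.pi * y)) : ℝ) : ℂ) * Complex.I := by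
    rw [← Complex.ofReal_cos, ← Complex.ofReal_sin]; push_cast; ring
  rw [h, Complex.norm_add_mul_I]
  have hc : Real.cos (-(2 * Real.pi * y)) = 1 - 2 * Real.sin (Real.pi * y) ^ 2 := by
    have h2 : (-(2 * Real.pi * y)) = 2 * (-(Real.pi * y)) := by ring
    rw [h2, Real.cos_two_mul', Real.cos_sq', Real.sin_neg]; ring
  have hs : Real.sin (-(2 * Real.pi * y)) ^ 2 = 1 - Real.cos (-(2 * Real.pi * y)) ^ 2 := Real.sin_sq _
  have key : (Real.cos (-(2 * Real.pi * y)) - 1) ^ 2 + Real.sin (-(2 * Real.pi * y)) ^ 2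
      = (2 * |Real.sin (Real.pi * y)|) ^ 2 := by
    rw [hs, hc]
    have : |Real.sin (Real.pi * y)| ^ 2 = Real.sin (Real.pi * y) ^ 2 := sq_abs _
    nlinarith [this]
  rw [key, Real.sqrt_sq (by positivity)]

lemma geom_block (w : ℂ) (N M : ℕ) :
    (∑ k ∈ range N, (w ^ M) ^ k) * (∑ ℓ ∈ range M, w ^ ℓ) = ∑ m ∈ range (N * M), w ^ m := by
  induction N with
  | zero => simp
  | succ n ih =>
    rw [sum_range_succ, add_mul, ih, Nat.succ_mul, sum_range_add]
    congr 1
    rw [mul_sum]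
    exact sum_congr rfl fun i _ => by rw [← pow_mul, ← pow_add, Nat.mul_comm]

lemma digit_expansion (s : ℕ) (hs : 1 ≤ s) :
    ∀ n ℓ, ℓ < s ^ n → ℓ = ∑ j ∈ range n, digitOf s ℓ j * s ^ j := by
  intro n
  induction n with
  | zero => intro ℓ hℓ; simp only [pow_zero, Nat.lt_one_iff] at hℓ; subst hℓ; simp
  | succ n ih =>
    intro ℓ hℓ
    rw [Finset.sum_range_succ']
    have hd : ∀ j, digitOf s ℓ (j + 1) = digitOf s (ℓ / s) j := by
      intro j
      unfold digitOf
      rw [pow_succ', Nat.div_div_eq_div_mul]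
    have hlt : ℓ / s < s ^ n := by
      rw [Nat.div_lt_iff_lt_mul (by omega)]
      calc ℓ < s ^ (n + 1) := hℓ
        _ = s ^ n * s := by rw [pow_succ]
    have hsum : ∑ j ∈ range n, digitOf s ℓ (j + 1) * s ^ (j + 1) = (ℓ / s) * s := by
      have : ∀ j ∈ range n, digitOf s ℓ (j + 1) * s ^ (j + 1) = (digitOf s (ℓ / s) j * s ^ j) * s := by
        intro j _; rw [hd j, pow_succ]; ring
      rw [sum_congr rfl this, ← sum_mul, ← ih (ℓ / s) hlt]
    rw [hsum]
    have h0 : digitOf s ℓ 0 = ℓ % s := by unfold digitOf; rw [pow_zero, Nat.div_one]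
    rw [h0, pow_zero, mul_one, mul_comm]
    exact (Nat.div_add_mod ℓ s).symm

lemma Lstar_card_le (s a b : ℕ) (hs : 1 ≤ s) (D : Finset ℕ) :
    (Lstar s a b D).card ≤ D.card ^ (b - a) := by
  classical
  set n := b - a with hn
  have hL : Lstar s a b D = (Finset.range (s ^ n)).filter fun ℓ => ∀ j < n, digitOf s ℓ j ∈ D := rfl
  have hmaps : ∀ ℓ ∈ Lstar s a b D, (fun j : Fin n => digitOf s ℓ j) ∈ Fintype.piFinset fun _ : Fin n => D := by
    intro ℓ hℓ
    rw [hL, mem_filter] at hℓ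
    exact Fintype.mem_piFinset.mpr fun j => hℓ.2 j j.isLt
  have hinj : Set.InjOn (fun ℓ (j : Fin n) => digitOf s ℓ j) ↑(Lstar s a b D) := by
    intro x hx y hy hxy
    rw [Finset.mem_coe, hL, mem_filter, mem_range] at hx hy
    refine (digit_expansion s hs n x hx.1).trans (Eq.trans ?_ (digit_expansion s hs n y hy.1).symm)
    refine sum_congr rfl fun j hj => ?_
    have h := congrFun hxy ⟨j, mem_range.mp hj⟩
    simp only [Fin.val_mk] at h
    rw [h]
  calc (Lstar s a b D).card ≤ (Fintype.piFinset fun _ : Fin n => D).card :=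
        Finset.card_le_card_of_injOn _ hmaps hinj
    _ = D.card ^ n := by
        rw [Fintype.card_piFinset, Finset.prod_const, Finset.card_univ, Fintype.card_fin]


/-- Lemma 6.6 (Pramanik–Zhang): single-scale estimate for the product
`𝔉 = 𝔄 · (ε 𝔅* + (1−ε) ℭ)`. For `1 ≤ |ξ| < s^b`,
`|𝔉(ξ)| ≤ ε + (s^{a−b}/N) |sin(π ξ s^{−b})|⁻¹`. -/
theorem single_scale_product_estimate (t s a b N : ℕ)
    (ht : 1 ≤ t) (hs : 3 ≤ s) (ha : 1 ≤ a) (hab : a < b)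
    (hsa : 2 * t < s ^ a) (hN : N + 1 = s ^ a / t)
    (D : Finset ℕ) (hD : D ⊆ Finset.range s) (h0 : 0 ∈ D) (hs1 : s - 1 ∉ D)
    (ε : ℝ) (hε : ε ∈ Set.Ioo (0 : ℝ) 1)
    (ξ : ℤ) (hξ1 : 1 ≤ |ξ|) (hξ2 : |ξ| < (s : ℤ) ^ b) :
    ‖Afun N s a ξ * ((ε : ℂ) * Bstar s a b D ξ + ((1 - ε : ℝ) : ℂ) * Cfun s a b ξ)‖ ≤
      ε + ((s : ℝ) ^ a / (s : ℝ) ^ b) / N * |Real.sin (Real.pi * (ξ : ℝ) / (s : ℝ) ^ b)|⁻¹ := by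
  obtain ⟨hε0, hε1⟩ := hε
  have hs0 : (0:ℝ) < (s:ℝ) := by exact_mod_cast (by omega : 0 < s)
  have hsb : (0:ℝ) < (s:ℝ) ^ b := by positivity
  have hsa0 : (0:ℝ) < (s:ℝ) ^ a := by positivity
  set M := s ^ (b - a) with hM
  have hM1 : 1 ≤ M := Nat.one_le_pow _ _ (by omega)
  have hN1 : 1 ≤ N := by
    have h2 : 2 ≤ s ^ a / t := (Nat.le_div_iff_mul_le ht).mpr (by omega)
    omega
  have hr : 1 ≤ D.card := Finset.card_pos.mpr ⟨0, h0⟩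
  have hr0 : (0:ℝ) < (D.card : ℝ) := by exact_mod_cast hr
  -- sin ≠ 0
  have hsin : Real.sin (Real.pi * (ξ:ℝ) / (s:ℝ) ^ b) ≠ 0 := by
    intro hz
    obtain ⟨n, hn⟩ := Real.sin_eq_zero_iff.mp hz
    have hne : Real.pi * ((n:ℝ) * (s:ℝ) ^ b) = Real.pi * (ξ:ℝ) := by
      field_simp at hn
      linear_combination Real.pi * hn
    have hne2 : (n:ℝ) * (s:ℝ) ^ b = (ξ:ℝ) := mul_left_cancel₀ Real.pi_ne_zero hne
    have hint : n * (s:ℤ) ^ b = ξ := by exact_mod_cast hne2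
    rcases eq_or_ne n 0 with h | h
    · rw [h, zero_mul] at hint
      rw [← hint] at hξ1
      norm_num at hξ1
    · have h1 : (1:ℤ) ≤ |n| := Int.one_le_abs (by omega)
      have hpos : (0:ℤ) < (s:ℤ) ^ b := by positivity
      have : (s:ℤ) ^ b ≤ |n| * (s:ℤ) ^ b := le_mul_of_one_le_left (le_of_lt hpos) h1
      have habs : |ξ| = |n| * (s:ℤ) ^ b := by
        rw [← hint, abs_mul, abs_of_nonneg (le_of_lt hpos)]
      linarith
  have hsinpos : 0 < |Real.sin (Real.pi * (ξ:ℝ) / (s:ℝ) ^ b)| := abs_pos.mpr hsin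
  -- the basic exponential and its powers
  set w := eneg ((ξ:ℝ) / (s:ℝ) ^ b) with hw
  have hwm : ∀ m : ℕ, eneg ((ξ:ℝ) * m / (s:ℝ) ^ b) = w ^ m := by
    intro m
    rw [hw, ← eneg_nat_mul]
    congr 1; ring
  have hnormw1 : ‖w - 1‖ = 2 * |Real.sin (Real.pi * (ξ:ℝ) / (s:ℝ) ^ b)| := by
    rw [hw, norm_eneg_sub_one, mul_div_assoc]
  have hw1 : w ≠ 1 := by
    intro h
    rw [h, sub_self, norm_zero] at hnormw1
    have := hnormw1.symm
    nlinarith [hsinpos]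
  have hMa : (s:ℝ) ^ a * (s:ℝ) ^ (b - a) = (s:ℝ) ^ b := by
    rw [← pow_add]; congr 1; omega
  have hA : ∀ k : ℕ, eneg ((ξ:ℝ) * k / (s:ℝ) ^ a) = (w ^ M) ^ k := by
    intro k
    rw [← pow_mul, ← hwm (M * k)]
    congr 1
    have hcast : ((M * k : ℕ) : ℝ) = (s:ℝ) ^ (b - a) * k := by
      rw [hM]; push_cast; ring
    rw [hcast, ← hMa]
    field_simp
  -- product identity for A·C
  have hprod : Afun N s a ξ * Cfun s a b ξ
      = ((N:ℂ)⁻¹ * (((s:ℝ) ^ a / (s:ℝ) ^ b : ℝ) : ℂ)) * ∑ m ∈ range (N * M), w ^ m := by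
    unfold Afun Cfun
    rw [show (∑ k ∈ range N, eneg ((ξ:ℝ) * k / (s:ℝ) ^ a)) = ∑ k ∈ range N, (w ^ M) ^ k from
        sum_congr rfl fun k _ => hA k,
      show (∑ ℓ ∈ range (s ^ (b - a)), eneg ((ξ:ℝ) * ℓ / (s:ℝ) ^ b)) = ∑ ℓ ∈ range M, w ^ ℓ from
        sum_congr rfl fun ℓ _ => hwm ℓ]
    rw [← geom_block w N M]
    ring
  -- norm of the geometric sum
  have hgeom : ‖∑ m ∈ range (N * M), w ^ m‖ ≤ 2 / ‖w - 1‖ := by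
    have hwne : ‖w - 1‖ ≠ 0 := by
      rw [hnormw1]; positivity
    have hcpos : 0 < ‖w - 1‖ := lt_of_le_of_ne (norm_nonneg _) (Ne.symm hwne)
    rw [geom_sum_eq hw1, norm_div]
    refine div_le_div_of_nonneg_right ?_ hcpos.le
    calc ‖w ^ (N * M) - 1‖ ≤ ‖w ^ (N * M)‖ + ‖(1:ℂ)‖ := norm_sub_le _ _
      _ = 1 + 1 := by rw [norm_pow, hw, norm_eneg, one_pow, norm_one]
      _ = 2 := by norm_num
  -- norm of Afun
  have hnormA : ‖Afun N s a ξ‖ ≤ 1 := by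
    unfold Afun
    rw [norm_mul, norm_inv, Complex.norm_natCast]
    have h2 : ‖∑ k ∈ range N, eneg ((ξ:ℝ) * k / (s:ℝ) ^ a)‖ ≤ (N:ℝ) := by
      calc ‖∑ k ∈ range N, eneg ((ξ:ℝ) * k / (s:ℝ) ^ a)‖
          ≤ ∑ k ∈ range N, ‖eneg ((ξ:ℝ) * k / (s:ℝ) ^ a)‖ := norm_sum_le _ _
        _ = (N:ℝ) := by
            simp only [norm_eneg, sum_const, card_range, nsmul_eq_mul, mul_one]
    have hNpos : (0:ℝ) < N := by exact_mod_cast hN1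
    calc (N:ℝ)⁻¹ * ‖∑ k ∈ range N, eneg ((ξ:ℝ) * k / (s:ℝ) ^ a)‖
        ≤ (N:ℝ)⁻¹ * N := by
          exact mul_le_mul_of_nonneg_left h2 (inv_nonneg.mpr hNpos.le)
      _ = 1 := by field_simp
  -- norm of Bstar
  have hnormB : ‖Bstar s a b D ξ‖ ≤ 1 := by
    unfold Bstar
    rw [norm_mul, Complex.norm_real, Real.norm_eq_abs,
      abs_of_nonneg (by positivity : (0:ℝ) ≤ (D.card:ℝ) ^ a / (D.card:ℝ) ^ b)]
    have h2 : ‖∑ ℓ ∈ Lstar s a b D, eneg ((ξ:ℝ) * ℓ / (s:ℝ) ^ b)‖ ≤ ((D.card:ℝ)) ^ (b - a) := by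
      calc ‖∑ ℓ ∈ Lstar s a b D, eneg ((ξ:ℝ) * ℓ / (s:ℝ) ^ b)‖
          ≤ ∑ ℓ ∈ Lstar s a b D, ‖eneg ((ξ:ℝ) * ℓ / (s:ℝ) ^ b)‖ := norm_sum_le _ _
        _ = ((Lstar s a b D).card : ℝ) := by
            simp only [norm_eneg, sum_const, nsmul_eq_mul, mul_one]
        _ ≤ ((D.card : ℕ) ^ (b - a) : ℕ) := by
            exact_mod_cast Lstar_card_le s a b (by omega) D
        _ = ((D.card:ℝ)) ^ (b - a) := by push_cast; ring
    have hrb : (D.card:ℝ) ^ a * (D.card:ℝ) ^ (b - a) = (D.card:ℝ) ^ b := by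
      rw [← pow_add]; congr 1; omega
    calc (D.card:ℝ) ^ a / (D.card:ℝ) ^ b * ‖∑ ℓ ∈ Lstar s a b D, eneg ((ξ:ℝ) * ℓ / (s:ℝ) ^ b)‖
        ≤ (D.card:ℝ) ^ a / (D.card:ℝ) ^ b * (D.card:ℝ) ^ (b - a) := by
          exact mul_le_mul_of_nonneg_left h2 (by positivity)
      _ = 1 := by
          rw [div_mul_eq_mul_div, hrb, div_self (by positivity)]
  -- norm of the product A·C
  have hNpos : (0:ℝ) < (N:ℝ) := by exact_mod_cast hN1
  have hAC : ‖Afun N s a ξ * Cfun s a b ξ‖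
      ≤ ((s:ℝ) ^ a / (s:ℝ) ^ b) / N * |Real.sin (Real.pi * (ξ:ℝ) / (s:ℝ) ^ b)|⁻¹ := by
    rw [hprod, norm_mul, norm_mul, norm_inv, Complex.norm_natCast, Complex.norm_real,
      Real.norm_eq_abs, abs_of_nonneg (by positivity : (0:ℝ) ≤ (s:ℝ) ^ a / (s:ℝ) ^ b)]
    have hstep : ‖∑ m ∈ range (N * M), w ^ m‖
        ≤ |Real.sin (Real.pi * (ξ:ℝ) / (s:ℝ) ^ b)|⁻¹ := by
      refine hgeom.trans (le_of_eq ?_)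
      rw [hnormw1]
      rw [eq_comm, inv_eq_iff_eq_inv, eq_comm, inv_div]
      rw [mul_comm, mul_div_assoc, div_self (by norm_num : (2:ℝ) ≠ 0), mul_one]
    calc (N:ℝ)⁻¹ * ((s:ℝ) ^ a / (s:ℝ) ^ b) * ‖∑ m ∈ range (N * M), w ^ m‖
        ≤ (N:ℝ)⁻¹ * ((s:ℝ) ^ a / (s:ℝ) ^ b) * |Real.sin (Real.pi * (ξ:ℝ) / (s:ℝ) ^ b)|⁻¹ := by
          exact mul_le_mul_of_nonneg_left hstep (by positivity)
      _ = ((s:ℝ) ^ a / (s:ℝ) ^ b) / N * |Real.sin (Real.pi * (ξ:ℝ) / (s:ℝ) ^ b)|⁻¹ := by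
          ring
  -- assemble
  have hsplit : Afun N s a ξ * ((ε : ℂ) * Bstar s a b D ξ + ((1 - ε : ℝ) : ℂ) * Cfun s a b ξ)
      = (ε : ℂ) * (Afun N s a ξ * Bstar s a b D ξ)
        + ((1 - ε : ℝ) : ℂ) * (Afun N s a ξ * Cfun s a b ξ) := by
    push_cast
    ring
  rw [hsplit]
  have hRpos : (0:ℝ) ≤ ((s:ℝ) ^ a / (s:ℝ) ^ b) / N * |Real.sin (Real.pi * (ξ:ℝ) / (s:ℝ) ^ b)|⁻¹ := by
    positivity
  calc ‖(ε : ℂ) * (Afun N s a ξ * Bstar s a b D ξ)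
        + ((1 - ε : ℝ) : ℂ) * (Afun N s a ξ * Cfun s a b ξ)‖
      ≤ ‖(ε : ℂ) * (Afun N s a ξ * Bstar s a b D ξ)‖
        + ‖((1 - ε : ℝ) : ℂ) * (Afun N s a ξ * Cfun s a b ξ)‖ := norm_add_le _ _
    _ = ε * (‖Afun N s a ξ‖ * ‖Bstar s a b D ξ‖)
        + (1 - ε) * ‖Afun N s a ξ * Cfun s a b ξ‖ := by
        rw [norm_mul, norm_mul, norm_mul, Complex.norm_real, Complex.norm_real,
          Real.norm_eq_abs, Real.norm_eq_abs, abs_of_nonneg hε0.le,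
          abs_of_nonneg (by linarith : (0:ℝ) ≤ 1 - ε)]
    _ ≤ ε * 1 + 1 * (((s:ℝ) ^ a / (s:ℝ) ^ b) / N * |Real.sin (Real.pi * (ξ:ℝ) / (s:ℝ) ^ b)|⁻¹) := by
        refine add_le_add ?_ ?_
        · refine mul_le_mul_of_nonneg_left ?_ hε0.le
          calc ‖Afun N s a ξ‖ * ‖Bstar s a b D ξ‖ ≤ 1 * 1 :=
                mul_le_mul hnormA hnormB (norm_nonneg _) zero_le_one
            _ = 1 := by ring
        · exact mul_le_mul (by linarith) hAC (norm_nonneg _) zero_le_one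
    _ = ε + ((s:ℝ) ^ a / (s:ℝ) ^ b) / N * |Real.sin (Real.pi * (ξ:ℝ) / (s:ℝ) ^ b)|⁻¹ := by
        ring
end

section
/- There exists an absolute constant C₀ > 0 with the following property. Let s₁, s₂ ≥ 3 and a₁ < b₁, a₂ < b₂ be positive integers with 16 s₁^{b₁} < s₂^{a₂}, and let N₂ be the positive integer defined by N₂ + 1 = ⌊s₂^{a₂} / s₁^{b₁}⌋. Define ℌ(ξ) := (1 − e(ξ N₂ s₂^{−a₂})) / (1 − e(ξ s₁^{−b₁})). Then for every ξ ∈ ℤ such that s₁^{b₁} does not divide ξ and ξ² ≤ s₁^{b₁} s₂^{a₂}, one has |ℌ(ξ) − 1| ≤ C₀ |ξ| s₁^{b₁} s₂^{−a₂}. -/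
open Finset

lemma eneg_add (a b : ℝ) : eneg a * eneg b = eneg (a + b) := by
  rw [eneg, eneg, eneg, ← Complex.exp_add]
  push_cast
  ring_nf

lemma norm_one_sub_eneg (y : ℝ) :
    ‖1 - eneg y‖ = 2 * |Real.sin (Real.pi * y)| := by
  obtain ⟨a, ha⟩ : ∃ a : ℝ, a = Real.pi * y := ⟨_, rfl⟩
  rw [← ha]
  have key : (1 : ℂ) - eneg y
      = Complex.exp (-(a : ℂ) * Complex.I) *
        (Complex.exp ((a : ℂ) * Complex.I) - Complex.exp (-(a : ℂ) * Complex.I)) := by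
    rw [mul_sub, ← Complex.exp_add, ← Complex.exp_add, eneg]
    congr 1
    · rw [show -(a : ℂ) * Complex.I + (a : ℂ) * Complex.I = 0 by ring, Complex.exp_zero]
    · congr 1
      rw [ha]
      push_cast
      ring
  have hdiff : Complex.exp ((a : ℂ) * Complex.I) - Complex.exp (-(a : ℂ) * Complex.I)
      = 2 * Complex.sin a * Complex.I := by
    rw [Complex.exp_mul_I, show -(a:ℂ) * Complex.I = (-a : ℂ) * Complex.I by ring,
      Complex.exp_mul_I, Complex.cos_neg, Complex.sin_neg]
    ring
  rw [key, hdiff, norm_mul, norm_mul, norm_mul]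
  have h1 : ‖Complex.exp (-(a : ℂ) * Complex.I)‖ = 1 := by
    rw [show -(a:ℂ) * Complex.I = ((-a : ℝ) : ℂ) * Complex.I by push_cast; ring]
    rw [Complex.norm_exp_ofReal_mul_I]
  have h2 : ‖Complex.sin (a : ℂ)‖ = |Real.sin a| := by
    rw [← Complex.ofReal_sin, Complex.norm_real, Real.norm_eq_abs]
  have h1' : ‖Complex.exp (-(↑a * Complex.I))‖ = 1 := by
    rw [show -((a:ℂ) * Complex.I) = -(a:ℂ) * Complex.I by ring, h1]
  simp [h1, h2, Complex.norm_I, h1']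

lemma norm_one_sub_eneg_le (y : ℝ) : ‖1 - eneg y‖ ≤ 2 * Real.pi * |y| := by
  rw [norm_one_sub_eneg]
  have := Real.abs_sin_le_abs (x := Real.pi * y)
  rw [abs_mul, abs_of_nonneg Real.pi_pos.le] at this
  nlinarith [Real.pi_pos]

lemma sin_lower_aux {r q : ℝ} (hq : 0 < q) (hr1 : 1 ≤ r) (h : 2 * r ≤ q) :
    2 / q ≤ |Real.sin (Real.pi * (r / q))| := by
  have hπ := Real.pi_pos
  have hx0 : 0 ≤ Real.pi * (r / q) := by positivity
  have hx1 : Real.pi * (r / q) ≤ Real.pi / 2 := by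
    rw [mul_div_assoc'] at *
    rw [div_le_div_iff₀ hq two_pos]
    nlinarith
  have := Real.mul_le_sin hx0 hx1
  have h2 : 2 / q ≤ 2 / Real.pi * (Real.pi * (r / q)) := by
    rw [show 2 / Real.pi * (Real.pi * (r / q)) = 2 * (r / q) by field_simp,
      div_le_iff₀ hq, mul_assoc, div_mul_cancel₀ _ hq.ne']
    nlinarith
  calc 2 / q ≤ 2 / Real.pi * (Real.pi * (r / q)) := h2
    _ ≤ Real.sin (Real.pi * (r / q)) := this
    _ ≤ |Real.sin (Real.pi * (r / q))| := le_abs_self _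

lemma sin_lower {r q : ℝ} (hq : 0 < q) (hr1 : 1 ≤ r) (hr2 : r ≤ q - 1) :
    2 / q ≤ |Real.sin (Real.pi * (r / q))| := by
  rcases le_or_gt (2 * r) q with h | h
  · exact sin_lower_aux hq hr1 h
  · have h1 : 1 ≤ q - r := by linarith
    have h2 : 2 * (q - r) ≤ q := by linarith
    have hs : Real.sin (Real.pi * (r / q)) = Real.sin (Real.pi * ((q - r) / q)) := by
      rw [show Real.pi * (r / q) = Real.pi - Real.pi * ((q - r) / q) by
        field_simp; ring, Real.sin_pi_sub]
    rw [hs]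
    exact sin_lower_aux hq h1 h2

lemma denom_lower {q : ℕ} (hq : 0 < q) {ξ : ℤ} (h : ¬((q : ℤ) ∣ ξ)) :
    4 / (q : ℝ) ≤ ‖1 - eneg ((ξ : ℝ) / (q : ℝ))‖ := by
  rw [norm_one_sub_eneg]
  have hqZ : (0 : ℤ) < (q : ℤ) := by exact_mod_cast hq
  have hqR : (0 : ℝ) < (q : ℝ) := by exact_mod_cast hq
  obtain ⟨r, hr⟩ : ∃ r : ℤ, r = ξ % (q : ℤ) := ⟨_, rfl⟩
  obtain ⟨k, hk⟩ : ∃ k : ℤ, k = ξ / (q : ℤ) := ⟨_, rfl⟩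
  have hr0 : r ≠ 0 := fun hh => h (Int.dvd_of_emod_eq_zero (hr ▸ hh))
  have hrge : 0 ≤ r := hr ▸ Int.emod_nonneg ξ hqZ.ne'
  have hrlt : r < q := hr ▸ Int.emod_lt_of_pos ξ hqZ
  have hξ : (ξ : ℝ) = q * k + r := by
    have h2 : ((q : ℤ) * k + r : ℤ) = ξ := by rw [hr, hk]; exact Int.mul_ediv_add_emod ξ (q : ℤ)
    exact_mod_cast h2.symm
  have harg : Real.pi * ((ξ : ℝ) / q) = Real.pi * ((r : ℝ) / q) + k * Real.pi := by
    rw [hξ]; field_simp; ring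
  have habs : |((-1 : ℝ)) ^ k| = 1 := by
    rcases Int.even_or_odd k with hk' | hk'
    · rw [hk'.neg_one_zpow, abs_one]
    · rw [hk'.neg_one_zpow, abs_neg, abs_one]
  rw [harg, Real.sin_add_int_mul_pi, abs_mul, habs, one_mul]
  have h1 : (1 : ℝ) ≤ (r : ℝ) := by
    have : 1 ≤ r := lt_of_le_of_ne hrge (Ne.symm hr0)
    exact_mod_cast this
  have h2 : (r : ℝ) ≤ (q : ℝ) - 1 := by
    have h3 : r ≤ (q : ℤ) - 1 := by omega
    have h4 : (r : ℝ) ≤ ((q : ℤ) : ℝ) - 1 := by exact_mod_cast h3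
    push_cast at h4
    linarith
  have h5 := sin_lower hqR h1 h2
  have h6 : (4 : ℝ) / q = 2 * (2 / q) := by ring
  linarith

/-- Lemma 6.9 (Pramanik–Zhang): there is an absolute constant `C₀ > 0` such that,
with `16 s₁^{b₁} < s₂^{a₂}` and `N₂ + 1 = ⌊s₂^{a₂}/s₁^{b₁}⌋`, the function
`ℌ(ξ) = (1 − e(ξ N₂ s₂^{−a₂}))/(1 − e(ξ s₁^{−b₁}))` satisfies
`|ℌ(ξ) − 1| ≤ C₀ |ξ| s₁^{b₁} s₂^{−a₂}` whenever `s₁^{b₁} ∤ ξ` and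
`ξ² ≤ s₁^{b₁} s₂^{a₂}`. -/
theorem Hfun_estimate :
    ∃ C₀ : ℝ, 0 < C₀ ∧
      ∀ s₁ s₂ a₁ b₁ a₂ b₂ N₂ : ℕ, 3 ≤ s₁ → 3 ≤ s₂ →
        1 ≤ a₁ → a₁ < b₁ → 1 ≤ a₂ → a₂ < b₂ →
        16 * s₁ ^ b₁ < s₂ ^ a₂ → N₂ + 1 = s₂ ^ a₂ / s₁ ^ b₁ →
        ∀ ξ : ℤ, ¬ ((s₁ : ℤ) ^ b₁ ∣ ξ) →
          (ξ : ℝ) ^ 2 ≤ (s₁ : ℝ) ^ b₁ * (s₂ : ℝ) ^ a₂ →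
          ‖(1 - eneg ((ξ : ℝ) * N₂ / (s₂ : ℝ) ^ a₂)) /
              (1 - eneg ((ξ : ℝ) / (s₁ : ℝ) ^ b₁)) - 1‖ ≤
            C₀ * |(ξ : ℝ)| * (s₁ : ℝ) ^ b₁ / (s₂ : ℝ) ^ a₂ := by
  refine ⟨4, by norm_num, ?_⟩
  intro s₁ s₂ a₁ b₁ a₂ b₂ N₂ hs₁ hs₂ ha₁ hab₁ ha₂ hab₂ h16 hN ξ hdvd _hsq
  have hπ := Real.pi_pos
  set P : ℕ := s₁ ^ b₁ with hPdef
  set Q : ℕ := s₂ ^ a₂ with hQdef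
  have hP : 0 < P := pow_pos (by omega) _
  have hQ : 0 < Q := pow_pos (by omega) _
  have hPr : (0 : ℝ) < (s₁ : ℝ) ^ b₁ := by positivity
  have hQr : (0 : ℝ) < (s₂ : ℝ) ^ a₂ := by positivity
  set Pr : ℝ := (s₁ : ℝ) ^ b₁ with hPr'
  set Qr : ℝ := (s₂ : ℝ) ^ a₂ with hQr'
  have hPcast : ((P : ℕ) : ℝ) = Pr := by push_cast [hPdef]; rfl
  have hQcast : ((Q : ℕ) : ℝ) = Qr := by push_cast [hQdef]; rfl
  -- denominator lower bound
  have hdvd' : ¬ ((P : ℤ) ∣ ξ) := by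
    intro hh; apply hdvd; rw [hPdef] at hh; push_cast at hh; exact hh
  have hDlow : 4 / Pr ≤ ‖1 - eneg ((ξ : ℝ) / Pr)‖ := by
    have := denom_lower hP hdvd'
    rwa [hPcast] at this
  have hDpos : (0 : ℝ) < ‖1 - eneg ((ξ : ℝ) / Pr)‖ := lt_of_lt_of_le (by positivity) hDlow
  have hDne : (1 : ℂ) - eneg ((ξ : ℝ) / Pr) ≠ 0 := by
    intro hh; rw [hh] at hDpos; simp at hDpos
  -- floor estimates
  have h1n : (N₂ + 1) * P ≤ Q := by rw [hN]; exact Nat.div_mul_le_self Q P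
  have h2n : Q < (N₂ + 2) * P := by
    have h3 : Q / P < N₂ + 2 := by omega
    exact (Nat.div_lt_iff_lt_mul hP).mp h3
  have h1r : ((N₂ : ℝ) + 1) * Pr ≤ Qr := by
    rw [← hPcast, ← hQcast]; exact_mod_cast h1n
  have h2r : Qr < ((N₂ : ℝ) + 2) * Pr := by
    rw [← hPcast, ← hQcast]; exact_mod_cast h2n
  -- the difference of phases
  set δ : ℝ := (ξ : ℝ) * N₂ / Qr - (ξ : ℝ) / Pr with hδdef
  have hfloor : |(N₂ : ℝ) * Pr - Qr| ≤ 2 * Pr := by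
    rw [abs_le]; constructor <;> nlinarith
  have hδbound : |δ| ≤ 2 * |(ξ : ℝ)| / Qr := by
    have hδeq : δ = (ξ : ℝ) * (((N₂ : ℝ) * Pr - Qr) / (Pr * Qr)) := by
      rw [hδdef]; field_simp
    rw [hδeq, abs_mul, abs_div, abs_of_pos (mul_pos hPr hQr)]
    have hle : |(N₂ : ℝ) * Pr - Qr| / (Pr * Qr) ≤ 2 / Qr := by
      rw [div_le_div_iff₀ (mul_pos hPr hQr) hQr]
      calc |(N₂ : ℝ) * Pr - Qr| * Qr ≤ (2 * Pr) * Qr := by nlinarith [abs_nonneg ((N₂:ℝ)*Pr - Qr)]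
        _ = 2 * (Pr * Qr) := by ring
    calc |(ξ : ℝ)| * (|(N₂ : ℝ) * Pr - Qr| / (Pr * Qr)) ≤ |(ξ : ℝ)| * (2 / Qr) :=
          mul_le_mul_of_nonneg_left hle (abs_nonneg _)
      _ = 2 * |(ξ : ℝ)| / Qr := by ring
  -- rewrite H - 1
  have halg : (1 - eneg ((ξ : ℝ) * N₂ / Qr)) / (1 - eneg ((ξ : ℝ) / Pr)) - 1
      = (eneg ((ξ : ℝ) / Pr) * (1 - eneg δ)) / (1 - eneg ((ξ : ℝ) / Pr)) := by
    rw [div_sub_one hDne]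
    congr 1
    rw [mul_sub, mul_one, eneg_add, show (ξ : ℝ) / Pr + δ = (ξ : ℝ) * N₂ / Qr by rw [hδdef]; ring]
    ring
  rw [halg, norm_div, norm_mul, norm_eneg, one_mul]
  -- numerator upper bound
  have hnum : ‖1 - eneg δ‖ ≤ 4 * Real.pi * |(ξ : ℝ)| / Qr := by
    calc ‖1 - eneg δ‖ ≤ 2 * Real.pi * |δ| := norm_one_sub_eneg_le δ
      _ ≤ 2 * Real.pi * (2 * |(ξ : ℝ)| / Qr) := by
          exact mul_le_mul_of_nonneg_left hδbound (by positivity)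
      _ = 4 * Real.pi * |(ξ : ℝ)| / Qr := by ring
  calc ‖1 - eneg δ‖ / ‖1 - eneg ((ξ : ℝ) / Pr)‖
      ≤ (4 * Real.pi * |(ξ : ℝ)| / Qr) / (4 / Pr) :=
        div_le_div₀ (by positivity) hnum (by positivity) hDlow
    _ = Real.pi * |(ξ : ℝ)| * Pr / Qr := by field_simp
    _ ≤ 4 * |(ξ : ℝ)| * Pr / Qr := by
        have := Real.pi_le_four
        have h0 : 0 ≤ |(ξ : ℝ)| * Pr / Qr := by positivity
        calc Real.pi * |(ξ : ℝ)| * Pr / Qr = Real.pi * (|(ξ : ℝ)| * Pr / Qr) := by ring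
          _ ≤ 4 * (|(ξ : ℝ)| * Pr / Qr) := mul_le_mul_of_nonneg_right Real.pi_le_four h0
          _ = 4 * |(ξ : ℝ)| * Pr / Qr := by ring
end

section
/- There exists an absolute constant C₀ > 0 such that for all integers s ≥ 2, 1 ≤ a < b, every nonempty digit set 𝒟 ⊆ {0,1,…,s−1}, and every nonzero ξ ∈ ℤ: |𝔅*(ξ) − 1| ≤ C₀ min(1, |ξ|/s^a), and consequently, for every ε ∈ (0,1), the function 𝔴₁(ξ) := ε · 1̂(ξ s^{−b}) · (𝔅*(ξ) − 1) satisfies |𝔴₁(ξ)| ≤ C₀ · min(1, s^b/|ξ|) · min(1, |ξ|/s^a), uniformly in ε. -/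
open Finset

section helpers

lemma norm_exp_mul_I_sub_one_le (t : ℝ) : ‖Complex.exp (t * Complex.I) - 1‖ ≤ |t| := by
  have hre : (Complex.exp (t * Complex.I) - 1).re = Real.cos t - 1 := by
    simp [Complex.exp_ofReal_mul_I_re]
  have him : (Complex.exp (t * Complex.I) - 1).im = Real.sin t := by
    simp [Complex.exp_ofReal_mul_I_im]
  have hsq : ‖Complex.exp (t * Complex.I) - 1‖ ^ 2 = 2 - 2 * Real.cos t := by
    rw [Complex.sq_norm, Complex.normSq_apply, hre, him]
    nlinarith [Real.sin_sq_add_cos_sq t]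
  have hct : Real.cos t = 1 - 2 * Real.sin (t/2) ^ 2 := by
    have h := Real.cos_two_mul (t/2)
    have h2 := Real.sin_sq_add_cos_sq (t/2)
    have ht : (2 : ℝ) * (t/2) = t := by ring
    rw [ht] at h; nlinarith
  have hs : Real.sin (t/2) ^ 2 ≤ (t/2) ^ 2 := by
    rw [← sq_abs (Real.sin (t/2)), ← sq_abs (t/2)]
    exact pow_le_pow_left₀ (abs_nonneg _) (Real.abs_sin_le_abs) 2
  have h0 : ‖Complex.exp (t * Complex.I) - 1‖ ^ 2 ≤ |t| ^ 2 := by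
    rw [hsq, sq_abs]; nlinarith
  calc ‖Complex.exp (t * Complex.I) - 1‖
      = Real.sqrt (‖Complex.exp (t * Complex.I) - 1‖ ^ 2) := (Real.sqrt_sq (norm_nonneg _)).symm
    _ ≤ Real.sqrt (|t| ^ 2) := Real.sqrt_le_sqrt h0
    _ = |t| := Real.sqrt_sq (abs_nonneg _)

lemma norm_eneg_sub_one_le (y : ℝ) : ‖eneg y - 1‖ ≤ 2 * Real.pi * |y| := by
  have h : -(2 * Real.pi * Complex.I * (y:ℂ)) = ((-(2 * Real.pi * y) : ℝ) : ℂ) * Complex.I := by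
    push_cast; ring
  rw [eneg, h]
  refine (norm_exp_mul_I_sub_one_le _).trans_eq ?_
  rw [abs_neg, abs_mul, abs_mul, abs_of_nonneg (by norm_num : (0:ℝ) ≤ 2),
    abs_of_nonneg Real.pi_pos.le]

lemma norm_oneHat_le_one (θ : ℝ) : ‖oneHat θ‖ ≤ 1 := by
  have := intervalIntegral.norm_integral_le_of_norm_le_const
    (C := 1) (f := fun x : ℝ => eneg (x * θ)) (a := 0) (b := 1)
    (fun x _ => by rw [norm_eneg])
  simpa [oneHat] using this

lemma norm_oneHat_le_inv (θ : ℝ) (hθ : θ ≠ 0) : ‖oneHat θ‖ ≤ 1 / |θ| := by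
  have hc : (-(2 * Real.pi * θ) : ℂ) * Complex.I ≠ 0 := by
    simp only [ne_eq, mul_eq_zero, Complex.I_ne_zero, or_false]
    simp only [neg_eq_zero, mul_eq_zero]
    push_neg
    exact ⟨⟨by norm_num, by exact_mod_cast Real.pi_ne_zero⟩, by exact_mod_cast hθ⟩
  have heq : oneHat θ = ∫ x in (0:ℝ)..1, Complex.exp ((-(2 * Real.pi * θ) : ℂ) * Complex.I * x) := by
    unfold oneHat eneg
    congr 1; ext x; congr 1; push_cast; ring
  rw [heq, integral_exp_mul_complex hc, norm_div]
  have h1 : ‖Complex.exp ((-(2 * Real.pi * θ) : ℂ) * Complex.I * 1) - Complex.exp ((-(2 * Real.pi * θ) : ℂ) * Complex.I * 0)‖ ≤ 2 := by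
    refine (norm_sub_le _ _).trans ?_
    have e1 : ‖Complex.exp ((-(2 * Real.pi * θ) : ℂ) * Complex.I * 1)‖ = 1 := by
      rw [mul_one]
      have : (-(2 * Real.pi * θ) : ℂ) * Complex.I = ((-(2 * Real.pi * θ) : ℝ) : ℂ) * Complex.I := by
        push_cast; ring
      rw [this, Complex.norm_exp_ofReal_mul_I]
    have e2 : ‖Complex.exp ((-(2 * Real.pi * θ) : ℂ) * Complex.I * 0)‖ = 1 := by simp
    rw [e1, e2]; norm_num
  have h2 : ‖(-(2 * Real.pi * θ) : ℂ) * Complex.I‖ = 2 * Real.pi * |θ| := by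
    rw [norm_mul, Complex.norm_I, mul_one]
    have : (-(2 * Real.pi * θ) : ℂ) = ((-(2 * Real.pi * θ) : ℝ) : ℂ) := by push_cast; ring
    rw [this, Complex.norm_real, Real.norm_eq_abs, abs_neg, abs_mul, abs_mul,
      abs_of_nonneg (by norm_num : (0:ℝ) ≤ 2), abs_of_nonneg Real.pi_pos.le]
  rw [h2]
  have hθ' : 0 < |θ| := abs_pos.mpr hθ
  rw [div_le_div_iff₀ (by positivity) (by positivity)]
  calc ‖_ - _‖ * |θ| ≤ 2 * |θ| := mul_le_mul_of_nonneg_right h1 (abs_nonneg _)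
    _ ≤ 1 * (2 * Real.pi * |θ|) := by nlinarith [Real.pi_gt_three]

lemma card_digit_filter (s : ℕ) (hs : 2 ≤ s) (D : Finset ℕ) (hD : D ⊆ Finset.range s) :
    ∀ n : ℕ, ((Finset.range (s ^ n)).filter fun ℓ => ∀ j < n, digitOf s ℓ j ∈ D).card
      = D.card ^ n := by
  have hs0 : 0 < s := by omega
  intro n
  induction n with
  | zero => simp
  | succ n ih =>
    rw [pow_succ, pow_succ', ← ih, ← Finset.card_product]
    apply Finset.card_bij' (fun ℓ _ => ((ℓ % s, ℓ / s) : ℕ × ℕ)) (fun p _ => p.1 + s * p.2)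
    · intro ℓ hℓ
      simp only [Finset.mem_filter, Finset.mem_range] at hℓ
      obtain ⟨hlt, hdig⟩ := hℓ
      simp only [Finset.mem_product, Finset.mem_filter, Finset.mem_range]
      refine ⟨?_, ?_, ?_⟩
      · have := hdig 0 (by omega)
        simpa [digitOf] using this
      · exact Nat.div_lt_of_lt_mul (by rw [mul_comm] at hlt; exact hlt)
      · intro j hj
        have := hdig (j + 1) (by omega)
        simpa [digitOf, Nat.div_div_eq_div_mul, pow_succ'] using this
    · intro p hp
      simp only [Finset.mem_product, Finset.mem_filter, Finset.mem_range] at hp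
      obtain ⟨hd, hm, hdig⟩ := hp
      have hds : p.1 < s := Finset.mem_range.mp (hD hd)
      simp only [Finset.mem_filter, Finset.mem_range]
      constructor
      · calc p.1 + s * p.2 < s + s * p.2 := by omega
          _ = s * (p.2 + 1) := by ring
          _ ≤ s * s ^ n := Nat.mul_le_mul_left s (by omega)
          _ = s ^ n * s := by ring
      · intro j hj
        match j with
        | 0 => simpa [digitOf, Nat.add_mul_mod_self_left, Nat.mod_eq_of_lt hds] using hd
        | j + 1 =>
          have h1 : (p.1 + s * p.2) / s = p.2 := by
            rw [Nat.add_mul_div_left _ _ hs0, Nat.div_eq_of_lt hds, zero_add]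
          have := hdig j (by omega)
          have h3 : (p.1 + s * p.2) / s ^ (j+1) = p.2 / s ^ j := by
            rw [pow_succ', ← Nat.div_div_eq_div_mul, h1]
          simpa [digitOf, h3] using this
    · intro ℓ hℓ; exact Nat.mod_add_div ℓ s
    · intro p hp
      simp only [Finset.mem_product] at hp
      have hds : p.1 < s := Finset.mem_range.mp (hD hp.1)
      have h1 : (p.1 + s * p.2) % s = p.1 := by
        rw [Nat.add_mul_mod_self_left, Nat.mod_eq_of_lt hds]
      have h2 : (p.1 + s * p.2) / s = p.2 := by
        rw [Nat.add_mul_div_left _ _ hs0, Nat.div_eq_of_lt hds, zero_add]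
      simp [h1, h2]

lemma Bstar_sub_one_core (s a b : ℕ) (D : Finset ℕ) (hs : 2 ≤ s) (ha : 1 ≤ a) (hab : a < b)
    (hD : D ⊆ Finset.range s) (hDne : D.Nonempty) (ξ : ℤ) :
    ‖Bstar s a b D ξ - 1‖ ≤ 2 * Real.pi * (|(ξ : ℝ)| / (s : ℝ) ^ a) ∧
      ‖Bstar s a b D ξ - 1‖ ≤ 2 := by
  set r := D.card with hr
  have hr1 : 1 ≤ r := Finset.card_pos.mpr hDne
  set n := b - a with hn
  have hban : b = a + n := by omega
  have hcard : (Lstar s a b D).card = r ^ n := card_digit_filter s hs D hD n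
  set c : ℝ := (r : ℝ) ^ a / (r : ℝ) ^ b with hc
  have hr0 : (0:ℝ) < (r:ℝ) := by exact_mod_cast hr1
  have hcpos : 0 < c := div_pos (pow_pos hr0 _) (pow_pos hr0 _)
  have hcrn : c * (r : ℝ) ^ n = 1 := by
    rw [hc, hban, pow_add]
    field_simp
  have hsum : Bstar s a b D ξ - 1
      = (c : ℂ) * ∑ ℓ ∈ Lstar s a b D, (eneg ((ξ : ℝ) * ℓ / (s : ℝ) ^ b) - 1) := by
    rw [Finset.sum_sub_distrib, mul_sub, Bstar]
    congr 1
    rw [Finset.sum_const, nsmul_eq_mul, mul_one, hcard]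
    rw [show ((r ^ n : ℕ) : ℂ) = (((r:ℝ)^n : ℝ) : ℂ) by push_cast; ring,
        ← Complex.ofReal_mul, hcrn, Complex.ofReal_one]
  have hs0 : (0:ℝ) < (s:ℝ) := by exact_mod_cast (by omega : 0 < s)
  have hterm : ∀ ℓ ∈ Lstar s a b D,
      ‖eneg ((ξ : ℝ) * ℓ / (s : ℝ) ^ b) - 1‖ ≤ 2 * Real.pi * (|(ξ : ℝ)| / (s : ℝ) ^ a) := by
    intro ℓ hℓ
    have hℓlt : (ℓ : ℝ) ≤ (s : ℝ) ^ n := by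
      have : ℓ < s ^ n := Finset.mem_range.mp (Finset.mem_filter.mp hℓ).1
      exact_mod_cast this.le
    refine (norm_eneg_sub_one_le _).trans ?_
    have hy : |(ξ : ℝ) * ℓ / (s : ℝ) ^ b| ≤ |(ξ : ℝ)| / (s : ℝ) ^ a := by
      rw [abs_div, abs_mul, abs_of_nonneg (by positivity : (0:ℝ) ≤ (s:ℝ)^b),
        Nat.abs_cast]
      rw [div_le_div_iff₀ (by positivity) (by positivity)]
      have hsb : (s:ℝ) ^ b = (s:ℝ) ^ a * (s:ℝ) ^ n := by rw [hban, pow_add]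
      calc |(ξ:ℝ)| * (ℓ:ℝ) * (s:ℝ)^a ≤ |(ξ:ℝ)| * (s:ℝ)^n * (s:ℝ)^a := by
            have := mul_le_mul_of_nonneg_left hℓlt (abs_nonneg (ξ:ℝ))
            exact mul_le_mul_of_nonneg_right this (by positivity)
        _ = |(ξ:ℝ)| * (s:ℝ)^b := by rw [hsb]; ring
    exact mul_le_mul_of_nonneg_left hy (by positivity)
  constructor
  · rw [hsum, norm_mul, Complex.norm_real, Real.norm_eq_abs, abs_of_pos hcpos]
    calc c * ‖∑ ℓ ∈ Lstar s a b D, (eneg ((ξ : ℝ) * ℓ / (s : ℝ) ^ b) - 1)‖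
        ≤ c * ((Lstar s a b D).card * (2 * Real.pi * (|(ξ : ℝ)| / (s : ℝ) ^ a))) := by
          refine mul_le_mul_of_nonneg_left ?_ hcpos.le
          refine (norm_sum_le _ _).trans ?_
          have := Finset.sum_le_card_nsmul _ _ _ hterm
          simpa [nsmul_eq_mul] using this
      _ = (c * (r:ℝ)^n) * (2 * Real.pi * (|(ξ : ℝ)| / (s : ℝ) ^ a)) := by
          rw [hcard]; push_cast; ring
      _ = 2 * Real.pi * (|(ξ : ℝ)| / (s : ℝ) ^ a) := by rw [hcrn, one_mul]
  · rw [hsum, norm_mul, Complex.norm_real, Real.norm_eq_abs, abs_of_pos hcpos]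
    calc c * ‖∑ ℓ ∈ Lstar s a b D, (eneg ((ξ : ℝ) * ℓ / (s : ℝ) ^ b) - 1)‖
        ≤ c * ((Lstar s a b D).card * 2) := by
          refine mul_le_mul_of_nonneg_left ?_ hcpos.le
          refine (norm_sum_le _ _).trans ?_
          have := Finset.sum_le_card_nsmul (Lstar s a b D)
            (fun ℓ => ‖eneg ((ξ : ℝ) * ℓ / (s : ℝ) ^ b) - 1‖) 2
            (fun ℓ _ => by
              refine (norm_sub_le _ _).trans ?_
              rw [norm_eneg, norm_one]; norm_num)
          simpa [nsmul_eq_mul] using this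
      _ = (c * (r:ℝ)^n) * 2 := by rw [hcard]; push_cast; ring
      _ = 2 := by rw [hcrn, one_mul]

end helpers

/-- Lemma 9.3 (Pramanik–Zhang): there is an absolute constant `C₀ > 0` such that
`|𝔅*(ξ) − 1| ≤ C₀ min(1, |ξ|/s^a)`, and consequently
`𝔴₁(ξ) = ε 1̂(ξ s^{−b})(𝔅*(ξ) − 1)` satisfies
`|𝔴₁(ξ)| ≤ C₀ min(1, s^b/|ξ|) min(1, |ξ|/s^a)` uniformly in `ε ∈ (0,1)`. -/
theorem Bstar_sub_one_estimate :
    ∃ C₀ : ℝ, 0 < C₀ ∧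
      ∀ s a b : ℕ, ∀ D : Finset ℕ, 2 ≤ s → 1 ≤ a → a < b →
        D ⊆ Finset.range s → D.Nonempty →
        ∀ ξ : ℤ, ξ ≠ 0 →
          ‖Bstar s a b D ξ - 1‖ ≤ C₀ * min 1 (|(ξ : ℝ)| / (s : ℝ) ^ a) ∧
          ∀ ε : ℝ, ε ∈ Set.Ioo (0 : ℝ) 1 →
            ‖(ε : ℂ) * oneHat ((ξ : ℝ) / (s : ℝ) ^ b) * (Bstar s a b D ξ - 1)‖ ≤
              C₀ * min 1 ((s : ℝ) ^ b / |(ξ : ℝ)|) * min 1 (|(ξ : ℝ)| / (s : ℝ) ^ a) := by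
  refine ⟨7, by norm_num, fun s a b D hs ha hab hD hDne ξ hξ => ?_⟩
  obtain ⟨hB1, hB2⟩ := Bstar_sub_one_core s a b D hs ha hab hD hDne ξ
  have hs0 : (0:ℝ) < (s:ℝ) := by exact_mod_cast (by omega : 0 < s)
  have hξ0 : (0:ℝ) < |(ξ:ℝ)| := by
    rw [abs_pos]; exact_mod_cast hξ
  set X : ℝ := |(ξ : ℝ)| / (s : ℝ) ^ a with hX
  have hX0 : 0 < X := by positivity
  have hpi : Real.pi < 3.5 := by linarith [Real.pi_lt_d2]
  have key : ‖Bstar s a b D ξ - 1‖ ≤ 7 * min 1 X := by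
    rcases le_total 1 X with h | h
    · rw [min_eq_left h]; linarith
    · rw [min_eq_right h]
      calc ‖Bstar s a b D ξ - 1‖ ≤ 2 * Real.pi * X := hB1
        _ ≤ 7 * X := by nlinarith
  refine ⟨key, fun ε hε => ?_⟩
  have hθ : ((ξ:ℝ) / (s:ℝ)^b) ≠ 0 := by
    apply div_ne_zero
    · exact_mod_cast hξ
    · positivity
  have hOne : ‖oneHat ((ξ:ℝ) / (s:ℝ)^b)‖ ≤ min 1 ((s:ℝ)^b / |(ξ:ℝ)|) := by
    refine le_min (norm_oneHat_le_one _) ?_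
    refine (norm_oneHat_le_inv _ hθ).trans_eq ?_
    rw [abs_div, abs_of_nonneg (by positivity : (0:ℝ) ≤ (s:ℝ)^b)]
    rw [one_div, inv_div]
  have hεn : ‖(ε : ℂ)‖ ≤ 1 := by
    rw [Complex.norm_real, Real.norm_eq_abs, abs_of_pos hε.1]
    exact hε.2.le
  rw [norm_mul, norm_mul]
  have hmin1 : (0:ℝ) ≤ min 1 ((s:ℝ)^b / |(ξ:ℝ)|) := le_min (by norm_num) (by positivity)
  have hmin2 : (0:ℝ) ≤ min 1 X := le_min (by norm_num) hX0.le
  calc ‖(ε:ℂ)‖ * ‖oneHat ((ξ:ℝ) / (s:ℝ)^b)‖ * ‖Bstar s a b D ξ - 1‖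
      ≤ 1 * (min 1 ((s:ℝ)^b / |(ξ:ℝ)|)) * (7 * min 1 X) := by
        refine mul_le_mul (mul_le_mul hεn hOne (norm_nonneg _) (by norm_num)) key
          (norm_nonneg _) ?_
        positivity
    _ = 7 * min 1 ((s:ℝ)^b / |(ξ:ℝ)|) * min 1 X := by ring
end

section
/- Let b ≥ 2 be an integer and let p be a prime that does not divide b. Then for every k ∈ ℕ, the multiplicative order of b modulo p^k satisfies ord_{p^k}(b) ≥ p^k / (2 b^p). -/
/-- If `(b : ZMod M)^e = 1` with `b ≥ 1`, then `M ∣ b^e - 1` in `ℕ`. -/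
lemma aux_dvd_pow_sub_one {b M e : ℕ} (hb : 1 ≤ b)
    (h : (b : ZMod M) ^ e = 1) : M ∣ b ^ e - 1 := by
  have h' : ((b ^ e : ℕ) : ZMod M) = ((1 : ℕ) : ZMod M) := by push_cast; simpa using h
  have hmod : (1 : ℕ) ≡ b ^ e [MOD M] := ((ZMod.natCast_eq_natCast_iff _ _ _).mp h').symm
  exact (Nat.modEq_iff_dvd' (Nat.one_le_pow _ _ hb)).mp hmod

/-- The order of `b` modulo `M` is positive when `b` is coprime to `M` and `M ≠ 0`. -/
lemma aux_orderOf_pos {b M : ℕ} (hM : M ≠ 0) (hco : b.Coprime M) :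
    0 < orderOf (b : ZMod M) := by
  have htot : (b : ZMod M) ^ M.totient = 1 := by
    have := Nat.ModEq.pow_totient hco
    have h' := (ZMod.natCast_eq_natCast_iff _ _ _).mpr this
    push_cast at h'
    simpa using h'
  exact (isOfFinOrder_iff_pow_eq_one.mpr
    ⟨M.totient, Nat.totient_pos.mpr (Nat.pos_of_ne_zero hM), htot⟩).orderOf_pos

/-- Lemma 12.2 (Pramanik–Zhang, after Schmidt): if `b ≥ 2` and `p` is a prime not
dividing `b`, then the multiplicative order of `b` modulo `p^k` satisfies
`ord_{p^k}(b) ≥ p^k / (2 b^p)` for every `k ≥ 1`. -/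
theorem order_mod_prime_power_lower_bound (b p : ℕ) (hb : 2 ≤ b)
    (hp : p.Prime) (hpb : ¬ p ∣ b) (k : ℕ) (hk : 1 ≤ k) :
    (p : ℝ) ^ k / (2 * (b : ℝ) ^ p) ≤ (orderOf (b : ZMod (p ^ k)) : ℝ) := by
  have hb1 : 1 ≤ b := le_trans (by norm_num) hb
  haveI : Fact p.Prime := ⟨hp⟩
  set n := orderOf (b : ZMod (p ^ k)) with hn
  have hcop : b.Coprime p := (Nat.coprime_comm.mp (hp.coprime_iff_not_dvd.mpr hpb))
  have hcopk : b.Coprime (p ^ k) := hcop.pow_right k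
  have hpk0 : p ^ k ≠ 0 := pow_ne_zero _ hp.pos.ne'
  have hnpos : 0 < n := aux_orderOf_pos hpk0 hcopk
  -- p^k ∣ b^n - 1
  have hdvd : p ^ k ∣ b ^ n - 1 := aux_dvd_pow_sub_one hb1 (pow_orderOf_eq_one _)
  -- key claim in ℕ : p ^ k ≤ 2 * b ^ p * n
  have key : p ^ k ≤ 2 * b ^ p * n := by
    rcases hp.eq_two_or_odd' with hp2 | hpodd
    · -- p = 2 : use the two-adic LTE with exponent 2n
      subst hp2
      have hbodd : ¬ (2 ∣ b) := hpb
      have hb3 : 3 ≤ b := by omega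
      have hdvd2 : 2 ^ k ∣ b ^ (2 * n) - 1 := by
        have h := Nat.sub_dvd_pow_sub_pow (b ^ n) 1 2
        rw [one_pow, ← pow_mul, mul_comm n 2] at h
        exact hdvd.trans h
      have hlt : (1 : ℕ) < b := by omega
      have hxy : 2 ∣ b - 1 := by omega
      have hx : ¬ 2 ∣ b := hbodd
      have h2n : 2 * n ≠ 0 := by omega
      have hlte := padicValNat.pow_two_sub_pow (x := b) (y := 1) hlt
        hxy hx (n := 2 * n) h2n ⟨n, by ring⟩
      simp only [one_pow, Nat.add_sub_cancel] at hlte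
      -- hlte : padicValNat 2 (b ^ (2n) - 1) + 1 = v(b+1) + v(b-1) + v(2n)
      have hkle : k ≤ padicValNat 2 (b ^ (2 * n) - 1) := by
        refine (padicValNat_dvd_iff_le ?_).mp hdvd2
        have : 1 < b ^ (2 * n) := Nat.one_lt_pow (by omega) hlt
        omega
      have hv2n : padicValNat 2 (2 * n) = 1 + padicValNat 2 n := by
        rw [padicValNat.mul (by norm_num) hnpos.ne', padicValNat.self (by norm_num)]
      have h1 : 2 ^ padicValNat 2 (b + 1) ≤ b + 1 :=
        Nat.le_of_dvd (by omega) pow_padicValNat_dvd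
      have h2 : 2 ^ padicValNat 2 (b - 1) ≤ b - 1 :=
        Nat.le_of_dvd (by omega) pow_padicValNat_dvd
      have h3 : 2 ^ padicValNat 2 n ≤ n := Nat.le_of_dvd hnpos pow_padicValNat_dvd
      have hkle' : k ≤ padicValNat 2 (b + 1) + padicValNat 2 (b - 1) + padicValNat 2 n := by
        omega
      calc 2 ^ k ≤ 2 ^ (padicValNat 2 (b + 1) + padicValNat 2 (b - 1) + padicValNat 2 n) :=
              Nat.pow_le_pow_right (by norm_num) hkle'
        _ = 2 ^ padicValNat 2 (b + 1) * 2 ^ padicValNat 2 (b - 1) * 2 ^ padicValNat 2 n := by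
              rw [pow_add, pow_add]
        _ ≤ (b + 1) * (b - 1) * n := by
              exact Nat.mul_le_mul (Nat.mul_le_mul h1 h2) h3
        _ ≤ 2 * b ^ 2 * n := by
              have hbb : (b + 1) * (b - 1) ≤ 2 * b ^ 2 := by
                have h4 : b - 1 ≤ b := Nat.sub_le b 1
                have h5 : b + 1 ≤ 2 * b := by omega
                calc (b + 1) * (b - 1) ≤ (2 * b) * b := Nat.mul_le_mul h5 h4
                  _ = 2 * b ^ 2 := by ring
              exact Nat.mul_le_mul_right n hbb
    · -- p odd
      set t := orderOf (b : ZMod p) with ht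
      have htpos : 0 < t := aux_orderOf_pos hp.pos.ne' hcop
      have htle : t ≤ p := by
        have htot : (b : ZMod p) ^ p.totient = 1 := by
          have h' := (ZMod.natCast_eq_natCast_iff _ _ _).mpr (Nat.ModEq.pow_totient hcop)
          push_cast at h'
          simpa using h'
        have hdvdt : t ∣ p.totient := orderOf_dvd_of_pow_eq_one htot
        exact le_trans (Nat.le_of_dvd (Nat.totient_pos.mpr hp.pos) hdvdt) (Nat.totient_le p)
      -- t ∣ n
      have htn : t ∣ n := by
        apply orderOf_dvd_of_pow_eq_one
        have hmap : (ZMod.castHom (dvd_pow_self p (by omega : k ≠ 0)) (ZMod p)) ((b : ZMod (p ^ k)) ^ n) = 1 := by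
          rw [pow_orderOf_eq_one]; exact map_one _
        simpa [map_pow, map_natCast] using hmap
      obtain ⟨m, hm⟩ := htn
      have hmpos : 0 < m := by
        rcases Nat.eq_zero_or_pos m with h | h
        · subst h; simp at hm; omega
        · exact h
      have hbt1 : 1 < b ^ t := Nat.one_lt_pow htpos.ne' (by omega)
      have hpdvd : p ∣ b ^ t - 1 := aux_dvd_pow_sub_one hb1 (pow_orderOf_eq_one _)
      have hx : ¬ p ∣ b ^ t := fun h => hpb (hp.dvd_of_dvd_pow h)
      have hlte := padicValNat.pow_sub_pow hpodd (x := b ^ t) (y := 1) hbt1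
        hpdvd hx (n := m) hmpos.ne'
      simp only [one_pow] at hlte
      rw [← pow_mul, ← hm] at hlte
      -- hlte : padicValNat p (b ^ n - 1) = padicValNat p (b ^ t - 1) + padicValNat p m
      have hkle : k ≤ padicValNat p (b ^ n - 1) := by
        refine (padicValNat_dvd_iff_le ?_).mp hdvd
        have : 1 < b ^ n := Nat.one_lt_pow hnpos.ne' (by omega)
        omega
      have h1 : p ^ padicValNat p (b ^ t - 1) ≤ b ^ t - 1 :=
        Nat.le_of_dvd (by omega) pow_padicValNat_dvd
      have h2 : p ^ padicValNat p m ≤ m := Nat.le_of_dvd hmpos pow_padicValNat_dvd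
      have hbtp : b ^ t ≤ b ^ p := Nat.pow_le_pow_right (by omega) htle
      have hmn : m ≤ n := by
        calc m ≤ t * m := Nat.le_mul_of_pos_left m htpos
          _ = n := hm.symm
      calc p ^ k ≤ p ^ (padicValNat p (b ^ t - 1) + padicValNat p m) :=
            Nat.pow_le_pow_right hp.pos (by omega)
        _ = p ^ padicValNat p (b ^ t - 1) * p ^ padicValNat p m := pow_add _ _ _
        _ ≤ (b ^ t - 1) * m := Nat.mul_le_mul h1 h2
        _ ≤ b ^ p * n := Nat.mul_le_mul (by omega) hmn
        _ ≤ 2 * b ^ p * n := by nlinarith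
  -- conclude over ℝ
  have h2bp : (0 : ℝ) < 2 * (b : ℝ) ^ p := by positivity
  rw [div_le_iff₀ h2bp, mul_comm]
  exact_mod_cast key
end
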